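/- In the time-dependent variational setting described in the context: for every R ≥ R₀ there exists a constant χ(R) > 0, depending only on n, the Tonelli constants of L, C_F, R₀, δ₀, c₀, the Lipschitz constant of u^f, sup_{K₀}|u^f|, and R (in particular independent of T and of the particular coupling c), such that for every t ∈ [0,T], every x ∈ B̄_R, and every minimizer ξ* from (t,x): sup_{s ∈ [t,T]} |ξ*(s)| ≤ χ(R). -/

import Mathlib

noncomputable section

open MeasureTheory Metric Set
open scoped RealInnerProductSpace NNReal

abbrev Euc (n : ℕ) := EuclideanSpace ℝ (Fin n)

/-- A strict Tonelli Lagrangian with constants `C₁ C₂ C₃`: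
(a) uniform convexity/boundedness of the second derivative in `v`;
(b) bound on the mixed second derivative `D²_{vx}L`;
(c) bound at `v = 0`. -/
def IsStrictTonelli {n : ℕ} (L : Euc n → Euc n → ℝ) (C₁ C₂ C₃ : ℝ) : Prop :=
  ContDiff ℝ 2 (Function.uncurry L) ∧
  (∀ x v w : Euc n,
      (1 / C₁) * ‖w‖ ^ 2 ≤ iteratedFDeriv ℝ 2 (L x) v ![w, w] ∧
      iteratedFDeriv ℝ 2 (L x) v ![w, w] ≤ C₁ * ‖w‖ ^ 2) ∧
  (∀ x v : Euc n, ‖fderiv ℝ (fun y => fderiv ℝ (L y) v) x‖ ≤ C₂ * (1 + ‖v‖)) ∧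
  (∀ x : Euc n, |L x 0| + ‖fderiv ℝ (fun y => L y 0) x‖ + ‖fderiv ℝ (L x) 0‖ ≤ C₃)

/-- The action `J_t(ξ) = ∫_t^T (L(ξ(s), ξ'(s)) + c(s, ξ(s))) ds + u^f(ξ(T))` of a
(Lipschitz) curve `ξ`, the derivative being taken almost everywhere. -/
def action {n : ℕ} (L : Euc n → Euc n → ℝ) (c : ℝ → Euc n → ℝ) (uf : Euc n → ℝ)
    (t T : ℝ) (ξ : ℝ → Euc n) : ℝ :=
  (∫ s in t..T, (L (ξ s) (deriv ξ s) + c s (ξ s))) + uf (ξ T)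

/-- `ξ` is a minimizer from `(t,x)`: it is Lipschitz, starts at `x` at time `t`, and its
action on `[t,T]` is no greater than that of any Lipschitz curve starting at `x` at time
`t`. -/
def IsMinimizer {n : ℕ} (L : Euc n → Euc n → ℝ) (c : ℝ → Euc n → ℝ) (uf : Euc n → ℝ)
    (t T : ℝ) (x : Euc n) (ξ : ℝ → Euc n) : Prop :=
  (∃ K : ℝ≥0, LipschitzWith K ξ) ∧ ξ t = x ∧
  ∀ η : ℝ → Euc n, (∃ K : ℝ≥0, LipschitzWith K η) → η t = x →
    action L c uf t T ξ ≤ action L c uf t T η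

/-- The uniform well condition: the point `xT ∈ K₀` minimizes `x ↦ L(x,0) + c(s,x)` over
`K₀` at every time `s ∈ [0,T]`, and beats every point outside `K₀` by at least `δ₀`. -/
def WellCondition {n : ℕ} (L : Euc n → Euc n → ℝ) (c : ℝ → Euc n → ℝ)
    (K₀ : Set (Euc n)) (δ₀ T : ℝ) (xT : Euc n) : Prop :=
  xT ∈ K₀ ∧ ∀ s ∈ Set.Icc (0 : ℝ) T,
    (∀ y ∈ K₀, L xT 0 + c s xT ≤ L y 0 + c s y) ∧
    (∀ y ∉ K₀, L xT 0 + c s xT + δ₀ ≤ L y 0 + c s y)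

open Filter intervalIntegral
open scoped Topology

lemma mono_from_deriv {f f' : ℝ → ℝ} (hf : ∀ τ, HasDerivAt f (f' τ) τ)
    (h' : ∀ τ, 0 ≤ τ → 0 ≤ f' τ) {τ : ℝ} (hτ : 0 ≤ τ) : f 0 ≤ f τ := by
  have hd : Differentiable ℝ f := fun τ => (hf τ).differentiableAt
  have hm : MonotoneOn f (Ici 0) := by
    apply monotoneOn_of_deriv_nonneg (convex_Ici 0) hd.continuous.continuousOn
      (fun x _ => (hd x).differentiableWithinAt)
    intro x hx
    rw [(hf x).deriv]
    rw [interior_Ici] at hx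
    exact h' x (le_of_lt hx)
  exact hm self_mem_Ici hτ hτ

lemma taylor_bounds {n : ℕ} {L : Euc n → Euc n → ℝ} {C₁ : ℝ} (hC₁ : 0 < C₁)
    (hsm : ContDiff ℝ 2 (Function.uncurry L))
    (hconv : ∀ x v w : Euc n, (1 / C₁) * ‖w‖ ^ 2 ≤ iteratedFDeriv ℝ 2 (L x) v ![w, w] ∧
      iteratedFDeriv ℝ 2 (L x) v ![w, w] ≤ C₁ * ‖w‖ ^ 2)
    (hRev : ∀ x v : Euc n, L x v = L x (-v)) (x v : Euc n) :
    L x 0 + (1 / (2*C₁)) * ‖v‖ ^ 2 ≤ L x v ∧ L x v ≤ L x 0 + (C₁/2) * ‖v‖ ^ 2 := by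
  have hLx : ContDiff ℝ 2 (L x) := by
    have : (L x) = (Function.uncurry L) ∘ (fun v : Euc n => ((x, v) : Euc n × Euc n)) := rfl
    rw [this]
    exact hsm.comp (contDiff_const.prodMk contDiff_id)
  have hLxd : Differentiable ℝ (L x) := hLx.differentiable (by norm_num)
  have hD1 : ContDiff ℝ 1 (fderiv ℝ (L x)) := hLx.fderiv_right (by norm_num)
  have hD1d : Differentiable ℝ (fderiv ℝ (L x)) := hD1.differentiable (by norm_num)
  -- fderiv at 0 vanishes
  have hzero : fderiv ℝ (L x) 0 = 0 := by
    set N : Euc n →L[ℝ] Euc n := -(ContinuousLinearMap.id ℝ (Euc n)) with hN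
    have hNf : HasFDerivAt (fun w : Euc n => -w) N 0 := by
      have := N.hasFDerivAt (x := (0 : Euc n))
      convert this using 1
      ext w; simp [hN]
    have hcomp : HasFDerivAt (fun w : Euc n => L x (-w))
        ((fderiv ℝ (L x) 0).comp N) 0 := by
      have h0 : HasFDerivAt (L x) (fderiv ℝ (L x) 0) (-(0 : Euc n)) := by
        simpa using (hLxd 0).hasFDerivAt
      exact h0.comp 0 hNf
    have heq : (fun w : Euc n => L x (-w)) = L x := by
      funext w; exact (hRev x w).symm
    rw [heq] at hcomp
    have h2 : (fderiv ℝ (L x) 0).comp N = fderiv ℝ (L x) 0 :=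
      hcomp.unique (hLxd 0).hasFDerivAt
    ext w
    have h4 := congrArg (fun (Φ : Euc n →L[ℝ] ℝ) => Φ w) h2
    simp only [ContinuousLinearMap.comp_apply, hN, ContinuousLinearMap.neg_apply,
      ContinuousLinearMap.id_apply, map_neg] at h4
    simp only [ContinuousLinearMap.zero_apply]
    linarith
  -- the one-dimensional restrictions
  set g : ℝ → ℝ := fun τ => L x (τ • v) with hg
  set p : ℝ → ℝ := fun τ => fderiv ℝ (L x) (τ • v) v with hp
  set q : ℝ → ℝ := fun τ => iteratedFDeriv ℝ 2 (L x) (τ • v) ![v, v] with hq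
  have hline : ∀ τ : ℝ, HasDerivAt (fun τ : ℝ => τ • v) v τ := by
    intro τ
    simpa using (hasDerivAt_id τ).smul_const v
  have hgd : ∀ τ, HasDerivAt g (p τ) τ := fun τ =>
    (hLxd (τ • v)).hasFDerivAt.comp_hasDerivAt τ (hline τ)
  have hpd : ∀ τ, HasDerivAt p (q τ) τ := by
    intro τ
    have h1 : HasDerivAt (fun τ : ℝ => fderiv ℝ (L x) (τ • v))
        (fderiv ℝ (fderiv ℝ (L x)) (τ • v) v) τ :=
      (hD1d (τ • v)).hasFDerivAt.comp_hasDerivAt τ (hline τ)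
    have h2 := h1.clm_apply (hasDerivAt_const τ v)
    simp only [map_zero, add_zero] at h2
    have h3 : q τ = fderiv ℝ (fderiv ℝ (L x)) (τ • v) v v := by
      show (iteratedFDeriv ℝ 2 (L x) (τ • v)) ![v, v] = _
      rw [iteratedFDeriv_two_apply]
      simp
    rw [h3]
    exact h2
  have hp0 : p 0 = 0 := by rw [hp]; simp [hzero]
  have hqlow : ∀ τ : ℝ, (1 / C₁) * ‖v‖ ^ 2 ≤ q τ := fun τ => (hconv x (τ • v) v).1
  have hqhigh : ∀ τ : ℝ, q τ ≤ C₁ * ‖v‖ ^ 2 := fun τ => (hconv x (τ • v) v).2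
  -- lower bound on p for τ ≥ 0
  have hplow : ∀ τ : ℝ, 0 ≤ τ → (1 / C₁) * ‖v‖ ^ 2 * τ ≤ p τ := by
    intro τ hτ
    have := mono_from_deriv (f := fun τ => p τ - (1 / C₁) * ‖v‖ ^ 2 * τ)
      (f' := fun τ => q τ - (1 / C₁) * ‖v‖ ^ 2)
      (fun τ => ((hpd τ).sub (((hasDerivAt_id τ).const_mul _))).congr_deriv (by ring))
      (fun τ _ => by linarith [hqlow τ]) hτ
    simp only [hp0] at this
    linarith
  have hphigh : ∀ τ : ℝ, 0 ≤ τ → p τ ≤ C₁ * ‖v‖ ^ 2 * τ := by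
    intro τ hτ
    have := mono_from_deriv (f := fun τ => C₁ * ‖v‖ ^ 2 * τ - p τ)
      (f' := fun τ => C₁ * ‖v‖ ^ 2 - q τ)
      (fun τ => (((hasDerivAt_id τ).const_mul _).sub (hpd τ)).congr_deriv (by ring))
      (fun τ _ => by linarith [hqhigh τ]) hτ
    simp only [hp0] at this
    linarith
  constructor
  · have := mono_from_deriv (f := fun τ => g τ - (1 / (2*C₁)) * ‖v‖ ^ 2 * τ ^ 2)
      (f' := fun τ => p τ - (1 / C₁) * ‖v‖ ^ 2 * τ)
      (fun τ => ((hgd τ).sub (((hasDerivAt_pow 2 τ).const_mul _))).congr_deriv (by ring))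
      (fun τ hτ => by linarith [hplow τ hτ]) (zero_le_one)
    have hg0 : g 0 = L x 0 := by rw [hg]; simp
    have hg1 : g 1 = L x v := by rw [hg]; simp
    rw [hg0, hg1] at this
    norm_num at this
    have he : (1:ℝ) / (2 * C₁) = C₁⁻¹ * (1 / 2) := by
      field_simp
    rw [he]
    linarith
  · have := mono_from_deriv (f := fun τ => (C₁/2) * ‖v‖ ^ 2 * τ ^ 2 - g τ)
      (f' := fun τ => C₁ * ‖v‖ ^ 2 * τ - p τ)
      (fun τ => (((hasDerivAt_pow 2 τ).const_mul _).sub (hgd τ)).congr_deriv (by ring))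
      (fun τ hτ => by linarith [hphigh τ hτ]) (zero_le_one)
    have hg0 : g 0 = L x 0 := by rw [hg]; simp
    have hg1 : g 1 = L x v := by rw [hg]; simp
    rw [hg0, hg1] at this
    norm_num at this
    linarith

lemma lip_ftc {n : ℕ} {K : ℝ≥0} {ξ : ℝ → Euc n} (hK : LipschitzWith K ξ) (a b : ℝ) :
    ξ b - ξ a = ∫ r in a..b, deriv ξ r := by
  have hcont : Continuous ξ := hK.continuous
  have hint : ∀ c d : ℝ, IntervalIntegrable ξ volume c d := fun c d =>
    hcont.intervalIntegrable c d
  set u : ℕ → ℝ := fun k => ((k : ℝ)+1)⁻¹ with hu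
  have hupos : ∀ k, 0 < u k := fun k => by positivity
  have hulim : Tendsto u atTop (𝓝 0) := by
    simpa [hu, one_div] using tendsto_one_div_add_atTop_nhds_zero_nat (𝕜 := ℝ)
  -- punctured approach sequence
  have happr : ∀ x : ℝ, Tendsto (fun k => x + u k) atTop (𝓝[≠] x) := by
    intro x
    apply tendsto_nhdsWithin_of_tendsto_nhds_of_eventually_within
    · simpa using tendsto_const_nhds.add hulim
    · exact Filter.Eventually.of_forall fun k => by
        simp [mem_compl_singleton_iff]
        positivity
  -- slope convergence at differentiable points
  have hslope : ∀ x : ℝ, DifferentiableAt ℝ ξ x →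
      Tendsto (fun k => (u k)⁻¹ • (ξ (x + u k) - ξ x)) atTop (𝓝 (deriv ξ x)) := by
    intro x hx
    have h1 := hasDerivAt_iff_tendsto_slope.1 hx.hasDerivAt
    have h2 := h1.comp (happr x)
    convert h2 using 2 with k
    simp [slope, vsub_eq_sub]
  -- Step A: dominated convergence
  have hmeas : ∀ k, AEStronglyMeasurable (fun r => (u k)⁻¹ • (ξ (r + u k) - ξ r))
      (volume.restrict (Set.uIoc a b)) := by
    intro k
    exact Continuous.aestronglyMeasurable (by fun_prop)
  have hbound : ∀ k, ∀ᵐ r ∂(volume : Measure ℝ), r ∈ Set.uIoc a b →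
      ‖(u k)⁻¹ • (ξ (r + u k) - ξ r)‖ ≤ (K : ℝ) := by
    intro k
    refine Filter.Eventually.of_forall fun r _ => ?_
    have := hK.dist_le_mul (r + u k) r
    rw [dist_eq_norm] at this
    have h2 : ‖ξ (r + u k) - ξ r‖ ≤ K * u k := by
      simpa [dist_eq_norm, abs_of_pos (hupos k)] using this
    rw [norm_smul, norm_inv, Real.norm_eq_abs, abs_of_pos (hupos k)]
    rw [inv_mul_le_iff₀ (hupos k)]
    linarith [h2]
  have hlim : ∀ᵐ r ∂(volume : Measure ℝ), r ∈ Set.uIoc a b →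
      Tendsto (fun k => (u k)⁻¹ • (ξ (r + u k) - ξ r)) atTop (𝓝 (deriv ξ r)) := by
    filter_upwards [hK.ae_differentiableAt_real] with r hr _
    exact hslope r hr
  have stepA : Tendsto (fun k => ∫ r in a..b, (u k)⁻¹ • (ξ (r + u k) - ξ r)) atTop
      (𝓝 (∫ r in a..b, deriv ξ r)) :=
    tendsto_integral_filter_of_dominated_convergence (fun _ => (K : ℝ))
      (Filter.Eventually.of_forall hmeas) (Filter.Eventually.of_forall hbound)
      (_root_.intervalIntegrable_const) hlim
  -- Step B: rewrite the integral
  set G : ℝ → Euc n := fun y => ∫ r in a..y, ξ r with hG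
  have hGsub : ∀ c d : ℝ, (∫ r in c..d, ξ r) = G d - G c := by
    intro c d
    rw [hG]
    simp only
    rw [eq_sub_iff_add_eq, add_comm]
    exact integral_add_adjacent_intervals (hint a c) (hint c d)
  have stepB : ∀ k, (∫ r in a..b, (u k)⁻¹ • (ξ (r + u k) - ξ r))
      = (u k)⁻¹ • (G (b + u k) - G b) - (u k)⁻¹ • (G (a + u k) - G a) := by
    intro k
    have h1 : IntervalIntegrable (fun r => ξ (r + u k)) volume a b :=
      (hcont.comp (continuous_id.add continuous_const)).intervalIntegrable a b
    rw [intervalIntegral.integral_smul, integral_sub h1 (hint a b)]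
    rw [integral_comp_add_right ξ (u k)]
    have : (∫ r in a + u k..b + u k, ξ r) - ∫ r in a..b, ξ r
        = (G (b + u k) - G b) - (G (a + u k) - G a) := by
      rw [hGsub, hGsub]; abel
    rw [this, smul_sub]
  -- Step C: slope of G
  have stepC : ∀ c : ℝ, Tendsto (fun k => (u k)⁻¹ • (G (c + u k) - G c)) atTop (𝓝 (ξ c)) := by
    intro c
    have hG' : HasDerivAt G (ξ c) c :=
      integral_hasDerivAt_right (hint a c)
        (hcont.stronglyMeasurable.stronglyMeasurableAtFilter) hcont.continuousAt
    have h1 := (hasDerivAt_iff_tendsto_slope.1 hG').comp (happr c)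
    convert h1 using 2 with k
    simp [slope, vsub_eq_sub]
  have lim2 : Tendsto (fun k => (u k)⁻¹ • (G (b + u k) - G b) - (u k)⁻¹ • (G (a + u k) - G a))
      atTop (𝓝 (ξ b - ξ a)) := (stepC b).sub (stepC a)
  have := stepA
  simp only [stepB] at this
  exact tendsto_nhds_unique lim2 this


set_option maxHeartbeats 2000000 in
/-- uniform bound on minimizers: in the time-dependent variational setting,
for every `R ≥ R₀` there is `χ(R) > 0`, independent of the horizon `T > 1` and of the
coupling `c` (with `|c| ≤ C_F` and satisfying the uniform well condition), such that every
minimizer `ξ*` from `(t,x)` with `t ∈ [0,T]`, `x ∈ B̄_R` satisfies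
`sup_{s ∈ [t,T]} |ξ*(s)| ≤ χ(R)`. -/
theorem stmt11 (n : ℕ) (hn : 1 ≤ n) (L : Euc n → Euc n → ℝ) (C₁ C₂ C₃ : ℝ)
    (hC₁ : 0 < C₁) (hC₂ : 0 < C₂) (hC₃ : 0 < C₃)
    (hTon : IsStrictTonelli L C₁ C₂ C₃)
    (hRev : ∀ x v : Euc n, L x v = L x (-v))
    (C_F : ℝ) (hCF : 0 ≤ C_F)
    (K₀ : Set (Euc n)) (hK₀c : IsCompact K₀) (hK₀ne : K₀.Nonempty)
    (R₀ : ℝ) (hR₀ : 0 < R₀) (hK₀R₀ : K₀ ⊆ closedBall 0 R₀)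
    (δ₀ : ℝ) (hδ₀ : 0 < δ₀)
    (uf : Euc n → ℝ) (Kf : ℝ≥0) (huf : LipschitzWith Kf uf)
    (c₀ : ℝ) (hc₀ : 0 ≤ c₀) (hufge : ∀ x, -c₀ ≤ uf x)
    (R : ℝ) (hR : R₀ ≤ R) :
    ∃ χ > (0 : ℝ), ∀ T : ℝ, 1 < T → ∀ c : ℝ → Euc n → ℝ,
      ContinuousOn (fun p : ℝ × Euc n => c p.1 p.2) (Set.Icc 0 T ×ˢ Set.univ) →
      (∀ s ∈ Set.Icc (0 : ℝ) T, ∀ x, |c s x| ≤ C_F) →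
      (∃ xT : Euc n, WellCondition L c K₀ δ₀ T xT) →
      ∀ t ∈ Set.Icc (0 : ℝ) T, ∀ x ∈ closedBall (0 : Euc n) R, ∀ ξ : ℝ → Euc n,
        IsMinimizer L c uf t T x ξ →
        ∀ s ∈ Set.Icc t T, ‖ξ s‖ ≤ χ := by
  classical
  obtain ⟨hsm, hconv, _, hC3bd⟩ := hTon
  have htay := taylor_bounds hC₁ hsm hconv hRev
  set α : ℝ := 1 / (2 * C₁) with hαdef
  have hα : 0 < α := by positivity
  have hRpos : 0 < R := lt_of_lt_of_le hR₀ hR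
  have hL0 : ∀ y : Euc n, |L y 0| ≤ C₃ := by
    intro y
    have h := hC3bd y
    have h1 := norm_nonneg (fderiv ℝ (fun y => L y 0) y)
    have h2 := norm_nonneg (fderiv ℝ (L y) 0)
    linarith
  have hLlow : ∀ y v : Euc n, L y 0 + α * ‖v‖ ^ 2 ≤ L y v := fun y v => (htay y v).1
  have hLup : ∀ y v : Euc n, L y v ≤ L y 0 + (C₁ / 2) * ‖v‖ ^ 2 := fun y v => (htay y v).2
  set Q : ℝ := C₃ + (C₁ / 2) * (2 * R) ^ 2 + C_F with hQdef
  set B : ℝ := Q + (C₃ + C_F) + (uf 0 + (Kf : ℝ) * R) + c₀ with hBdef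
  set B' : ℝ := max B 0 with hB'def
  have hB'0 : 0 ≤ B' := le_max_right _ _
  refine ⟨R + B' / (2 * δ₀) + C₁ * B' + 1, ?_, ?_⟩
  · have h1 : 0 ≤ B' / (2 * δ₀) := by positivity
    have h2 : 0 ≤ C₁ * B' := by positivity
    linarith
  rintro T hT c hccont hcbd ⟨xT, hxTK, hwell⟩ t ht x hx ξ ⟨⟨K, hKlip⟩, hξt, hminle⟩ s hs
  obtain ⟨ht0, htT⟩ := ht
  obtain ⟨hts, hsT⟩ := hs
  have hξc : Continuous ξ := hKlip.continuous
  have hxR : ‖x‖ ≤ R := by simpa [mem_closedBall, dist_zero_right] using hx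
  have hxTR₀ : ‖xT‖ ≤ R₀ := by
    simpa [mem_closedBall, dist_zero_right] using hK₀R₀ hxTK
  have hxTR : ‖xT‖ ≤ R := le_trans hxTR₀ hR
  have hsub : Icc t T ⊆ Icc (0 : ℝ) T := Icc_subset_Icc ht0 le_rfl
  set β : ℝ → ℝ := fun r => L xT 0 + c r xT with hβdef
  have hβbd : ∀ r ∈ Icc (0 : ℝ) T, |β r| ≤ C₃ + C_F := by
    intro r hr
    calc |β r| ≤ |L xT 0| + |c r xT| := abs_add_le _ _
    _ ≤ C₃ + C_F := add_le_add (hL0 xT) (hcbd r hr xT)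
  -- generic integrability of a bounded measurable function
  have bddInt : ∀ (f : ℝ → ℝ) (a b Cb : ℝ), StronglyMeasurable f → (∀ r, |f r| ≤ Cb) →
      IntervalIntegrable f volume a b := by
    intro f a b Cb hm hb
    rw [intervalIntegrable_iff]
    refine Integrable.mono' (g := fun _ => Cb) ?_ hm.aestronglyMeasurable ?_
    · exact integrableOn_const measure_Ioc_lt_top.ne
    · exact Filter.Eventually.of_forall fun r => by
        simpa [Real.norm_eq_abs] using hb r
  have hLmeas : ∀ ζ : ℝ → Euc n, Continuous ζ →
      StronglyMeasurable fun r => L (ζ r) (deriv ζ r) := by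
    intro ζ hζ
    exact hsm.continuous.comp_stronglyMeasurable
      (hζ.stronglyMeasurable.prodMk (stronglyMeasurable_deriv ζ))
  have hderiv_bd : ∀ (ζ : ℝ → Euc n) (Kζ : ℝ≥0), LipschitzWith Kζ ζ →
      ∀ r, ‖deriv ζ r‖ ≤ (Kζ : ℝ) := fun ζ Kζ hζ r => norm_deriv_le_of_lipschitz hζ
  -- integrability of the c-part along a continuous curve
  have hcint : ∀ ζ : ℝ → Euc n, Continuous ζ → ∀ a b : ℝ, t ≤ a → b ≤ T → a ≤ b →
      IntervalIntegrable (fun r => c r (ζ r)) volume a b := by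
    intro ζ hζ a b hta hbT hab
    apply ContinuousOn.intervalIntegrable
    rw [Set.uIcc_of_le hab]
    exact ContinuousOn.comp hccont ((continuous_id.prodMk hζ).continuousOn)
      (fun r hr => ⟨⟨le_trans ht0 (le_trans hta hr.1), le_trans hr.2 hbT⟩, mem_univ _⟩)
  have hβint : ∀ a b : ℝ, t ≤ a → b ≤ T → a ≤ b →
      IntervalIntegrable β volume a b := by
    intro a b hta hbT hab
    exact (_root_.intervalIntegrable_const).add (hcint (fun _ => xT) continuous_const a b hta hbT hab)
  -- integrability of the Lagrangian part along a Lipschitz curve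
  have hLint : ∀ (ζ : ℝ → Euc n) (Kζ : ℝ≥0), LipschitzWith Kζ ζ → ∀ a b : ℝ,
      IntervalIntegrable (fun r => L (ζ r) (deriv ζ r)) volume a b := by
    intro ζ Kζ hζ a b
    refine bddInt _ a b (C₃ + (C₁ / 2) * (Kζ : ℝ) ^ 2) (hLmeas ζ hζ.continuous) ?_
    intro r
    have h1 := hLlow (ζ r) (deriv ζ r)
    have h2 := hLup (ζ r) (deriv ζ r)
    have h3 := hL0 (ζ r)
    have h4 : ‖deriv ζ r‖ ^ 2 ≤ (Kζ : ℝ) ^ 2 :=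
      pow_le_pow_left₀ (norm_nonneg _) (hderiv_bd ζ Kζ hζ r) 2
    have h5 : 0 ≤ α * ‖deriv ζ r‖ ^ 2 := by positivity
    rw [abs_le]; rw [abs_le] at h3
    constructor
    · nlinarith
    · nlinarith
  have hfint : ∀ (ζ : ℝ → Euc n) (Kζ : ℝ≥0), LipschitzWith Kζ ζ → ∀ a b : ℝ,
      t ≤ a → b ≤ T → a ≤ b →
      IntervalIntegrable (fun r => L (ζ r) (deriv ζ r) + c r (ζ r) - β r) volume a b := by
    intro ζ Kζ hζ a b hta hbT hab
    exact ((hLint ζ Kζ hζ a b).add (hcint ζ hζ.continuous a b hta hbT hab)).sub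
      (hβint a b hta hbT hab)
  -- the comparison curve η
  set φ : ℝ → ℝ := fun r => min (max (r - t) 0) 1 with hφdef
  have hφlip : LipschitzWith 1 φ := by
    have h1 : LipschitzWith 1 (fun r : ℝ => r - t) :=
      LipschitzWith.of_dist_le_mul fun a b => by
        simp [Real.dist_eq, sub_sub_sub_cancel_right]
    exact (h1.max_const 0).min_const 1
  have hφmem : ∀ r, 0 ≤ φ r ∧ φ r ≤ 1 := fun r =>
    ⟨le_min (le_max_right _ _) zero_le_one, min_le_right _ _⟩
  set w : Euc n := xT - x with hwdef
  set η : ℝ → Euc n := fun r => x + φ r • w with hηdef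
  have hηlip : LipschitzWith ‖w‖₊ η := by
    apply LipschitzWith.of_dist_le_mul
    intro a b
    have h1 : dist (η a) (η b) = dist (φ a • w) (φ b • w) := dist_add_left x _ _
    have h2 : dist (φ a • w) (φ b • w) = |φ a - φ b| * ‖w‖ := by
      rw [dist_eq_norm, ← sub_smul, norm_smul, Real.norm_eq_abs]
    have h3 : |φ a - φ b| ≤ dist a b := by
      have := hφlip.dist_le_mul a b
      simpa [Real.dist_eq] using this
    have h4 : (0:ℝ) ≤ ‖w‖ := norm_nonneg _
    rw [h1, h2, coe_nnnorm]
    calc |φ a - φ b| * ‖w‖ ≤ dist a b * ‖w‖ := by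
          exact mul_le_mul_of_nonneg_right h3 h4
    _ = ‖w‖ * dist a b := by ring
  have hφt : φ t = 0 := by
    rw [hφdef]; simp
  have hηt : η t = x := by
    rw [hηdef]; simp only; rw [hφt, zero_smul, add_zero]
  have hηball : ∀ r, ‖η r‖ ≤ R := by
    intro r
    have hc : x + φ r • w = (1 - φ r) • x + φ r • xT := by
      rw [hwdef, smul_sub, sub_smul, one_smul]; abel
    have h0 := (hφmem r).1
    have h1 := (hφmem r).2
    have hA : ‖(1 - φ r) • x‖ = (1 - φ r) * ‖x‖ := by
      rw [norm_smul, Real.norm_eq_abs, abs_of_nonneg (by linarith)]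
    have hB : ‖φ r • xT‖ = φ r * ‖xT‖ := by
      rw [norm_smul, Real.norm_eq_abs, abs_of_nonneg h0]
    calc ‖η r‖ = ‖(1 - φ r) • x + φ r • xT‖ := by rw [hηdef]; simp only; rw [hc]
    _ ≤ ‖(1 - φ r) • x‖ + ‖φ r • xT‖ := norm_add_le _ _
    _ = (1 - φ r) * ‖x‖ + φ r * ‖xT‖ := by rw [hA, hB]
    _ ≤ (1 - φ r) * R + φ r * R := by
        apply add_le_add
        · exact mul_le_mul_of_nonneg_left hxR (by linarith)
        · exact mul_le_mul_of_nonneg_left hxTR h0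
    _ = R := by ring
  have hwR : ‖w‖ ≤ 2 * R := by
    rw [hwdef]
    calc ‖xT - x‖ ≤ ‖xT‖ + ‖x‖ := norm_sub_le _ _
    _ ≤ 2 * R := by linarith
  have hηd : ∀ r, ‖deriv η r‖ ≤ 2 * R := by
    intro r
    have h := hderiv_bd η ‖w‖₊ hηlip r
    rw [coe_nnnorm] at h
    linarith
  -- η is eventually constant equal to xT
  have hηconst : ∀ r, t + 1 < r → deriv η r = 0 ∧ η r = xT := by
    intro r hr
    have hφone : ∀ y, t + 1 ≤ y → φ y = 1 := by
      intro y hy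
      rw [hφdef]
      simp only
      rw [max_eq_left (by linarith), min_eq_right (by linarith)]
    have hev : η =ᶠ[𝓝 r] fun _ => x + w := by
      filter_upwards [Ioi_mem_nhds hr] with y hy
      rw [hηdef]
      simp only
      rw [hφone y (le_of_lt hy), one_smul]
    have hxw : x + w = xT := by rw [hwdef]; abel
    constructor
    · rw [hev.deriv_eq, deriv_const]
    · rw [hηdef]
      simp only
      rw [hφone r (le_of_lt hr), one_smul, hxw]
  -- upper bound for the η-excess integral
  set t₁ : ℝ := min (t + 1) T with ht₁def
  have htt₁ : t ≤ t₁ := le_min (by linarith) htT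
  have ht₁T : t₁ ≤ T := min_le_right _ _
  have ht₁1 : t₁ - t ≤ 1 := by
    have := min_le_left (t + 1) T
    rw [ht₁def]; linarith
  have hfη1 := hfint η ‖w‖₊ hηlip t t₁ le_rfl ht₁T htt₁
  have hfη2 := hfint η ‖w‖₊ hηlip t₁ T htt₁ le_rfl ht₁T
  have hfηT := hfint η ‖w‖₊ hηlip t T le_rfl le_rfl (le_trans htt₁ ht₁T)
  have hzero : (∫ r in t₁..T, (L (η r) (deriv η r) + c r (η r) - β r)) = 0 := by
    rw [intervalIntegral.integral_of_le ht₁T]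
    rw [MeasureTheory.setIntegral_congr_fun measurableSet_Ioc
      (g := fun _ => (0:ℝ)) ?_]
    · simp
    · intro r hr
      have hrt1 : t + 1 < r := by
        rcases le_or_gt (t + 1) T with h | h
        · have : t₁ = t + 1 := min_eq_left h
          rw [this] at hr
          exact hr.1
        · exfalso
          have : t₁ = T := min_eq_right (le_of_lt h)
          rw [this] at hr
          exact absurd hr.2 (not_le.2 hr.1)
      obtain ⟨hd0, hηxT⟩ := hηconst r hrt1
      simp [hd0, hηxT, hβdef]
  have hηup : ∀ r ∈ Icc t t₁, L (η r) (deriv η r) + c r (η r) - β r ≤ Q + (C₃ + C_F) := by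
    intro r hr
    have hr0T : r ∈ Icc (0:ℝ) T := ⟨le_trans ht0 hr.1, le_trans hr.2 ht₁T⟩
    have h1 := hLup (η r) (deriv η r)
    have h2 := hL0 (η r)
    have h3 := hcbd r hr0T (η r)
    have h4 : ‖deriv η r‖ ^ 2 ≤ (2 * R) ^ 2 :=
      pow_le_pow_left₀ (norm_nonneg _) (hηd r) 2
    have h5 := hβbd r hr0T
    have h6 : (C₁/2) * ‖deriv η r‖ ^ 2 ≤ (C₁/2) * (2*R)^2 :=
      mul_le_mul_of_nonneg_left h4 (by positivity)
    rw [abs_le] at h2 h3 h5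
    rw [hQdef]
    have hgoal : L (η r) (deriv η r) + c r (η r) - β r
        ≤ C₃ + C₁ / 2 * (2 * R) ^ 2 + C_F + (C₃ + C_F) := by
      clear_value α Q β φ w η
      linarith [h1, h2.2, h3.2, h5.1, h6]
    exact hgoal
  have hηexc : (∫ r in t..T, (L (η r) (deriv η r) + c r (η r) - β r)) ≤ Q + (C₃ + C_F) := by
    rw [← intervalIntegral.integral_add_adjacent_intervals hfη1 hfη2, hzero, add_zero]
    have h := intervalIntegral.integral_mono_on htt₁ hfη1 _root_.intervalIntegrable_const hηup
    rw [intervalIntegral.integral_const, smul_eq_mul] at h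
    have hQM : 0 ≤ Q + (C₃ + C_F) := by
      rw [hQdef]; positivity
    nlinarith
  -- action comparison
  have hact := hminle η ⟨‖w‖₊, hηlip⟩ hηt
  rw [action, action] at hact
  have hfξc := hfint ξ K hKlip t T le_rfl le_rfl (le_trans htt₁ ht₁T)
  have hβintT := hβint t T le_rfl le_rfl (le_trans htt₁ ht₁T)
  have hfξint : IntervalIntegrable (fun r => L (ξ r) (deriv ξ r) + c r (ξ r)) volume t T :=
    (hLint ξ K hKlip t T).add (hcint ξ hξc t T le_rfl le_rfl (le_trans htt₁ ht₁T))
  have hfηint : IntervalIntegrable (fun r => L (η r) (deriv η r) + c r (η r)) volume t T :=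
    (hLint η ‖w‖₊ hηlip t T).add
      (hcint η hηlip.continuous t T le_rfl le_rfl (le_trans htt₁ ht₁T))
  have hufη : uf (η T) ≤ uf 0 + (Kf : ℝ) * R := by
    have h := huf.dist_le_mul (η T) 0
    rw [Real.dist_eq, dist_zero_right] at h
    have h2 : (Kf : ℝ) * ‖η T‖ ≤ (Kf : ℝ) * R :=
      mul_le_mul_of_nonneg_left (hηball T) (Kf.coe_nonneg)
    have h3 := abs_le.1 (le_trans h h2)
    linarith [h3.2]
  set Ixi : ℝ := ∫ r in t..T, (L (ξ r) (deriv ξ r) + c r (ξ r) - β r) with hIxidef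
  have hIxiB : Ixi ≤ B' := by
    have e1 : Ixi = (∫ r in t..T, (L (ξ r) (deriv ξ r) + c r (ξ r))) - ∫ r in t..T, β r := by
      rw [hIxidef, intervalIntegral.integral_sub hfξint hβintT]
    have e2 : (∫ r in t..T, (L (η r) (deriv η r) + c r (η r) - β r))
        = (∫ r in t..T, (L (η r) (deriv η r) + c r (η r))) - ∫ r in t..T, β r := by
      rw [intervalIntegral.integral_sub hfηint hβintT]
    have h4 := hufge (ξ T)
    have : Ixi ≤ B := by
      rw [hBdef]
      rw [e1]
      rw [e2] at hηexc
      linarith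
    exact le_trans this (le_max_left _ _)
  -- lower bounds for the ξ-excess integral
  have hwell2 : ∀ r ∈ Icc t T, ∀ y : Euc n, β r ≤ L y 0 + c r y := by
    intro r hr y
    have hβr : β r = L xT 0 + c r xT := rfl
    rcases Classical.em (y ∈ K₀) with h | h
    · linarith [(hwell r (hsub hr)).1 y h]
    · linarith [(hwell r (hsub hr)).2 y h]
  have hlow1 : ∀ r ∈ Icc t T, α * ‖deriv ξ r‖ ^ 2
      ≤ L (ξ r) (deriv ξ r) + c r (ξ r) - β r := by
    intro r hr
    have h1 := hLlow (ξ r) (deriv ξ r)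
    have h2 := hwell2 r hr (ξ r)
    linarith
  have hsqmeas : StronglyMeasurable fun r => ‖deriv ξ r‖ ^ 2 :=
    ((stronglyMeasurable_deriv ξ).norm.pow 2)
  have hsqbd : ∀ r, |‖deriv ξ r‖ ^ 2| ≤ (K : ℝ) ^ 2 := by
    intro r
    rw [abs_of_nonneg (by positivity)]
    exact pow_le_pow_left₀ (norm_nonneg _) (hderiv_bd ξ K hKlip r) 2
  have hsqint : ∀ a b : ℝ, IntervalIntegrable (fun r => ‖deriv ξ r‖ ^ 2) volume a b :=
    fun a b => bddInt _ a b ((K:ℝ)^2) hsqmeas hsqbd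
  have hsqintα : IntervalIntegrable (fun r => α * ‖deriv ξ r‖ ^ 2) volume t T :=
    (hsqint t T).const_mul α
  have hIxi1 : α * (∫ r in t..T, ‖deriv ξ r‖ ^ 2) ≤ Ixi := by
    rw [← intervalIntegral.integral_const_mul]
    exact intervalIntegral.integral_mono_on (le_trans htt₁ ht₁T) hsqintα hfξc hlow1
  -- the exterior set
  set E : Set ℝ := ξ ⁻¹' K₀ᶜ with hEdef
  have hEopen : IsOpen E := hK₀c.isClosed.isOpen_compl.preimage hξc
  have hEmeas : MeasurableSet E := hEopen.measurableSet
  have hindmeas : StronglyMeasurable (E.indicator fun _ => δ₀) :=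
    stronglyMeasurable_const.indicator hEmeas
  have hindbd : ∀ r, |E.indicator (fun _ => δ₀) r| ≤ δ₀ := by
    intro r
    by_cases h : r ∈ E
    · rw [Set.indicator_of_mem h, abs_of_nonneg (le_of_lt hδ₀)]
    · rw [Set.indicator_of_notMem h]
      simpa using le_of_lt hδ₀
  have hindint : IntervalIntegrable (E.indicator fun _ => δ₀) volume t T :=
    bddInt _ t T δ₀ hindmeas hindbd
  have hlow2 : ∀ r ∈ Icc t T, E.indicator (fun _ => δ₀) r
      ≤ L (ξ r) (deriv ξ r) + c r (ξ r) - β r := by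
    intro r hr
    by_cases hE : r ∈ E
    · rw [Set.indicator_of_mem hE]
      have hβr : β r = L xT 0 + c r xT := rfl
      have h2 := (hwell r (hsub hr)).2 (ξ r) hE
      have h1 := hLlow (ξ r) (deriv ξ r)
      have h5 : 0 ≤ α * ‖deriv ξ r‖ ^ 2 := by positivity
      linarith
    · rw [Set.indicator_of_notMem hE]
      have h5 : 0 ≤ α * ‖deriv ξ r‖ ^ 2 := by positivity
      linarith [hlow1 r hr]
  have hIxi2 : δ₀ * (volume (Ioc t T ∩ E)).toReal ≤ Ixi := by
    have h := intervalIntegral.integral_mono_on (le_trans htt₁ ht₁T) hindint hfξc hlow2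
    rw [intervalIntegral.integral_of_le (le_trans htt₁ ht₁T),
      MeasureTheory.setIntegral_indicator hEmeas, MeasureTheory.setIntegral_const,
      smul_eq_mul, measureReal_def] at h
    rw [hIxidef]
    linarith [h]
  -- choice of σ
  set S : Set ℝ := Icc t s ∩ ξ ⁻¹' K₀ with hSdef
  have hScl : IsCompact S := isCompact_Icc.inter_right (hK₀c.isClosed.preimage hξc)
  have hkey : ∃ σ : ℝ, t ≤ σ ∧ σ ≤ s ∧ ‖ξ σ‖ ≤ R ∧ Ioc σ s ⊆ E := by
    rcases eq_empty_or_nonempty S with hS | hS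
    · refine ⟨t, le_rfl, hts, by rw [hξt]; exact hxR, ?_⟩
      intro r hr
      by_contra hrE
      have hrK : ξ r ∈ K₀ := not_not.mp hrE
      have : r ∈ S := ⟨⟨le_of_lt hr.1, hr.2⟩, hrK⟩
      rw [hS] at this
      exact this
    · have hσS : sSup S ∈ S := hScl.sSup_mem hS
      refine ⟨sSup S, hσS.1.1, hσS.1.2, ?_, ?_⟩
      · have := hK₀R₀ hσS.2
        rw [mem_closedBall, dist_zero_right] at this
        linarith
      · intro r hr
        by_contra hrE
        have hrK : ξ r ∈ K₀ := not_not.mp hrE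
        have hrS : r ∈ S := ⟨⟨le_trans hσS.1.1 (le_of_lt hr.1), hr.2⟩, hrK⟩
        have := le_csSup hScl.bddAbove hrS
        linarith [hr.1]
  obtain ⟨σ, hσ1, hσ2, hσR, hσE⟩ := hkey
  -- time outside the well is short
  have hmeasσ : δ₀ * (s - σ) ≤ B' := by
    have hsub2 : Ioc σ s ⊆ Ioc t T ∩ E := by
      intro r hr
      exact ⟨⟨lt_of_le_of_lt hσ1 hr.1, le_trans hr.2 hsT⟩, hσE hr⟩
    have h1 : volume (Ioc σ s) ≤ volume (Ioc t T ∩ E) := measure_mono hsub2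
    have h2 : volume (Ioc t T ∩ E) ≤ volume (Ioc t T) :=
      measure_mono inter_subset_left
    have hfin : volume (Ioc t T ∩ E) ≠ ⊤ :=
      ne_top_of_le_ne_top (LT.lt.ne measure_Ioc_lt_top) h2
    have h3 : (volume (Ioc σ s)).toReal ≤ (volume (Ioc t T ∩ E)).toReal :=
      ENNReal.toReal_mono hfin h1
    rw [Real.volume_Ioc, ENNReal.toReal_ofReal (by linarith)] at h3
    have h4 : δ₀ * (s - σ) ≤ δ₀ * (volume (Ioc t T ∩ E)).toReal :=
      mul_le_mul_of_nonneg_left h3 (le_of_lt hδ₀)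
    linarith [hIxi2, hIxiB]
  -- energy is bounded
  have hEnergy : (∫ r in t..T, ‖deriv ξ r‖ ^ 2) ≤ 2 * C₁ * B' := by
    have h1 : α * (∫ r in t..T, ‖deriv ξ r‖ ^ 2) ≤ B' := le_trans hIxi1 hIxiB
    have h2 : (∫ r in t..T, ‖deriv ξ r‖ ^ 2) ≤ B' / α := by
      rwa [le_div_iff₀' hα]
    have h3 : B' / α = 2 * C₁ * B' := by
      rw [hαdef]
      field_simp
    linarith
  -- fundamental theorem of calculus estimate
  have hftc : ‖ξ s - ξ σ‖ ≤ ∫ r in σ..s, ‖deriv ξ r‖ := by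
    rw [lip_ftc hKlip σ s]
    exact intervalIntegral.norm_integral_le_integral_norm hσ2
  have hnrmmeas : StronglyMeasurable fun r => ‖deriv ξ r‖ :=
    (stronglyMeasurable_deriv ξ).norm
  have hnrmbd : ∀ r, |‖deriv ξ r‖| ≤ (K : ℝ) := by
    intro r
    rw [abs_of_nonneg (norm_nonneg _)]
    exact hderiv_bd ξ K hKlip r
  have hnrmint : IntervalIntegrable (fun r => ‖deriv ξ r‖) volume σ s :=
    bddInt _ σ s (K:ℝ) hnrmmeas hnrmbd
  have hhalfint : IntervalIntegrable (fun r => 1/2 + (1/2) * ‖deriv ξ r‖ ^ 2) volume σ s :=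
    _root_.intervalIntegrable_const.add ((hsqint σ s).const_mul (1/2))
  have hptw : ∀ r ∈ Icc σ s, ‖deriv ξ r‖ ≤ 1/2 + (1/2) * ‖deriv ξ r‖ ^ 2 := by
    intro r _
    nlinarith [sq_nonneg (‖deriv ξ r‖ - 1)]
  have hJ1 : (∫ r in σ..s, ‖deriv ξ r‖)
      ≤ ∫ r in σ..s, (1/2 + (1/2) * ‖deriv ξ r‖ ^ 2) :=
    intervalIntegral.integral_mono_on hσ2 hnrmint hhalfint hptw
  have hJ2 : (∫ r in σ..s, (1/2 + (1/2) * ‖deriv ξ r‖ ^ 2))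
      = (s - σ) * (1/2) + (1/2) * ∫ r in σ..s, ‖deriv ξ r‖ ^ 2 := by
    rw [intervalIntegral.integral_add _root_.intervalIntegrable_const
      ((hsqint σ s).const_mul (1/2)), intervalIntegral.integral_const_mul,
      intervalIntegral.integral_const, smul_eq_mul]
  have hJ3 : (∫ r in σ..s, ‖deriv ξ r‖ ^ 2) ≤ ∫ r in t..T, ‖deriv ξ r‖ ^ 2 :=
    intervalIntegral.integral_mono_interval hσ1 hσ2 hsT
      (Filter.Eventually.of_forall fun r => by positivity) (hsqint t T)
  -- final assembly
  have hnorm : ‖ξ s‖ ≤ ‖ξ σ‖ + ‖ξ s - ξ σ‖ := by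
    have h := norm_add_le (ξ σ) (ξ s - ξ σ)
    simpa using h
  have hfinal1 : (s - σ) * (1/2) ≤ B' / (2 * δ₀) := by
    have h1 : s - σ ≤ B' / δ₀ := by
      rw [le_div_iff₀ hδ₀]; linarith [hmeasσ]
    have h2 : B' / δ₀ * (1/2) = B' / (2 * δ₀) := by ring
    nlinarith
  have hfinal2 : (1/2) * (∫ r in σ..s, ‖deriv ξ r‖ ^ 2) ≤ C₁ * B' := by
    linarith [le_trans hJ3 hEnergy]
  linarith [hnorm, hftc, hJ1, hJ2, hσR, hfinal1, hfinal2]
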